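/- If a vector field b : ℝ^d → ℝ^d is eventually strictly monotone, i.e. there exist R > 0, η > 0, λ > 0 such that ⟨b(x) − b(y), x − y⟩ ≤ η|x−y|² whenever |x|+|y| < R and ⟨b(x) − b(y), x − y⟩ ≤ −λ|x−y|² whenever |x|+|y| ≥ R, then there exists a constant C > 0 such that ⟨b(x), x⟩ ≤ −(λ/2)|x|² + C for all x ∈ ℝ^d. -/
import Mathlib


open scoped RealInnerProductSpace

/-- an eventually strictly monotone vector field satisfies
`⟪b x, x⟫ ≤ -(λ/2)‖x‖² + C` for some `C > 0`. -/
theorem eventually_strictly_monotone_dissipative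
    (d : ℕ) (b : EuclideanSpace ℝ (Fin d) → EuclideanSpace ℝ (Fin d))
    (R η lam : ℝ) (hR : 0 < R) (hη : 0 < η) (hlam : 0 < lam)
    (h1 : ∀ x y : EuclideanSpace ℝ (Fin d), ‖x‖ + ‖y‖ < R →
      ⟪b x - b y, x - y⟫ ≤ η * ‖x - y‖ ^ 2)
    (h2 : ∀ x y : EuclideanSpace ℝ (Fin d), R ≤ ‖x‖ + ‖y‖ →
      ⟪b x - b y, x - y⟫ ≤ -lam * ‖x - y‖ ^ 2) :
    ∃ C > 0, ∀ x : EuclideanSpace ℝ (Fin d),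
      ⟪b x, x⟫ ≤ -(lam / 2) * ‖x‖ ^ 2 + C := by

  set B := ‖b 0‖ with hB
  have hB0 : 0 ≤ B := norm_nonneg _
  refine ⟨(lam/2)*R^2 + η*R^2 + B*R + B^2/(2*lam) + 1, by positivity, ?_⟩
  intro x
  have hBx : ⟪b 0, x⟫ ≤ B * ‖x‖ := real_inner_le_norm _ _
  rcases lt_or_ge (‖x‖) R with h | h
  · have hx := h1 x 0 (by simpa using h)
    simp only [sub_zero, inner_sub_left] at hx
    have hxn : 0 ≤ ‖x‖ := norm_nonneg _
    have hdivpos : 0 ≤ B ^ 2 / (2 * lam) := by positivity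
    have hsq : ‖x‖ ^ 2 ≤ R ^ 2 := by nlinarith
    have h1a : η * ‖x‖ ^ 2 ≤ η * R ^ 2 := mul_le_mul_of_nonneg_left hsq hη.le
    have h1b : B * ‖x‖ ≤ B * R := mul_le_mul_of_nonneg_left h.le hB0
    have h1c : lam / 2 * ‖x‖ ^ 2 ≤ lam / 2 * R ^ 2 :=
      mul_le_mul_of_nonneg_left hsq (by linarith)
    linarith
  · have hx := h2 x 0 (by simpa using h)
    simp only [sub_zero, inner_sub_left] at hx
    have hxn : 0 ≤ ‖x‖ := norm_nonneg _
    have key : B * ‖x‖ - lam / 2 * ‖x‖ ^ 2 ≤ B ^ 2 / (2 * lam) := by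
      rw [le_div_iff₀ (by linarith : (0:ℝ) < 2 * lam)]
      nlinarith [sq_nonneg (lam * ‖x‖ - B)]
    nlinarith [key, mul_nonneg hB0 hR.le, mul_pos hη (mul_pos hR hR),
      mul_pos hlam (mul_pos hR hR)]
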